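/- Fix l ∈ [4] and let H_l be the subgroup of G generated by π_{(il)} for the three elements i ∈ [4] \ {l}. For distinct i,j,k ∈ [4] \ {l}, let Γ₄³(ijk) be the set of γ ∈ Γ₄³ with o_γ({i,j,k}) = (ijk). Then Γ₄³(ijk) is an orbit of H_l of size 4. -/

import Mathlib

abbrev Triple := Fin 4 × Fin 4 × Fin 4

def rot (t : Triple) : Triple := (t.2.1, t.2.2, t.1)

def DistinctTriple (t : Triple) : Prop := t.1 ≠ t.2.1 ∧ t.1 ≠ t.2.2 ∧ t.2.1 ≠ t.2.2

def cyc (t u : Triple) : Prop := u = t ∨ u = rot t ∨ u = rot (rot t)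

def fourth (t : Triple) : Fin 4 := 2 - (t.1 + t.2.1 + t.2.2)

def oRaw (t : Triple) (s : Finset (Fin 4)) : Triple :=
  if s = {t.1, t.2.1, t.2.2} then t
  else if s = {t.1, t.2.1, fourth t} then (t.1, t.2.1, fourth t)
  else if s = {t.2.1, t.2.2, fourth t} then (t.2.1, t.2.2, fourth t)
  else (t.2.2, t.1, fourth t)

def piRaw (s : Finset (Fin 4)) (t : Triple) : Triple :=
  if s = {t.1, t.2.1} then (t.2.1, t.1, fourth t)
  else if s = {t.2.1, t.2.2} then (t.2.2, t.2.1, fourth t)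
  else if s = {t.1, t.2.2} then (t.1, t.2.2, fourth t)
  else if s = {t.2.2, fourth t} then (t.1, t.2.1, fourth t)
  else if s = {t.2.1, fourth t} then (t.2.2, t.1, fourth t)
  else if s = {t.1, fourth t} then (t.2.1, t.2.2, fourth t)
  else t

def word (L : List (Finset (Fin 4))) (t : Triple) : Triple := L.foldr piRaw t

/-- a word in the generators `π_{(pl)}` of the subgroup `H_l` -/
def ValidWordH (l : Fin 4) (L : List (Finset (Fin 4))) : Prop :=
  ∀ s ∈ L, ∃ p : Fin 4, p ≠ l ∧ s = {p, l}

/-- membership in `Γ₄³(ijk) = {γ : o_γ({i,j,k}) = (ijk)}` -/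
def InGamma (i j k : Fin 4) (t : Triple) : Prop :=
  DistinctTriple t ∧ cyc (oRaw t {i, j, k}) (i, j, k)
instance : ∀ t, Decidable (DistinctTriple t) := fun t => by unfold DistinctTriple; infer_instance
instance : ∀ t u, Decidable (cyc t u) := fun t u => by unfold cyc; infer_instance
instance : ∀ i j k t, Decidable (InGamma i j k t) := fun i j k t => by unfold InGamma; infer_instance

set_option maxRecDepth 100000 in
set_option maxHeartbeats 4000000 in
theorem key1 : ∀ p l i j k : Fin 4, l≠i → l≠j → l≠k → i≠j → i≠k → j≠k → p≠l →
    ∀ t, InGamma i j k t → InGamma i j k (piRaw {p,l} t) := by decide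

set_option maxRecDepth 100000 in
set_option maxHeartbeats 4000000 in
theorem key2 : ∀ l i j k : Fin 4, l≠i → l≠j → l≠k → i≠j → i≠k → j≠k →
    ∀ t u, InGamma i j k t → InGamma i j k u →
    ∃ a b : Fin 4, a≠l ∧ b≠l ∧
      (cyc t u ∨ cyc (word [{a,l}] t) u ∨ cyc (word [{a,l},{b,l}] t) u) := by decide

set_option maxRecDepth 100000 in
set_option maxHeartbeats 4000000 in
theorem key3 : ∀ i j k : Fin 4, i≠j → i≠k → j≠k →
    (Finset.univ.filter fun t : Triple =>
      InGamma i j k t ∧ t.1 < t.2.1 ∧ t.1 < t.2.2).card = 4 := by decide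

/-- `Γ₄³(ijk)` is an orbit of `H_l` of size 4: it is `H_l`-stable, `H_l` acts
transitively on it, and it contains exactly 4 elements of `Γ₄³` (counted via the
canonical smallest-first representatives of cyclic classes). -/
theorem Hl_orbit (l i j k : Fin 4)
    (hli : l ≠ i) (hlj : l ≠ j) (hlk : l ≠ k)
    (hij : i ≠ j) (hik : i ≠ k) (hjk : j ≠ k) :
    (∀ t : Triple, InGamma i j k t → ∀ L, ValidWordH l L → InGamma i j k (word L t)) ∧
    (∀ t u : Triple, InGamma i j k t → InGamma i j k u →
      ∃ L, ValidWordH l L ∧ cyc (word L t) u) ∧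
    Nat.card {t : Triple // InGamma i j k t ∧ t.1 < t.2.1 ∧ t.1 < t.2.2} = 4 := by
  refine ⟨?_, ?_, ?_⟩
  · intro t ht L hL
    induction L with
    | nil => exact ht
    | cons s L ih =>
      obtain ⟨p, hp, rfl⟩ := hL s List.mem_cons_self
      exact key1 p l i j k hli hlj hlk hij hik hjk hp _
        (ih (fun s hs => hL s (List.mem_cons_of_mem _ hs)))
  · intro t u ht hu
    obtain ⟨a, b, ha, hb, h⟩ := key2 l i j k hli hlj hlk hij hik hjk t u ht hu
    rcases h with h | h | h
    · exact ⟨[], by intro s hs; simp at hs, h⟩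
    · refine ⟨[{a,l}], ?_, h⟩
      intro s hs; simp only [List.mem_singleton] at hs; exact ⟨a, ha, hs⟩
    · refine ⟨[{a,l},{b,l}], ?_, h⟩
      intro s hs
      rcases List.mem_cons.mp hs with rfl | hs
      · exact ⟨a, ha, rfl⟩
      · rcases List.mem_cons.mp hs with rfl | hs
        · exact ⟨b, hb, rfl⟩
        · simp at hs
  · rw [Nat.card_eq_fintype_card, Fintype.card_subtype]
    exact key3 i j k hij hik hjk
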